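/- Let F : ℂ⁶ → ℂ² be the polynomial map F(q₁,q₂,q₃,p₁,p₂,p₃) = (p₁q₁ + p₂q₂, p₂q₂ + p₃q₃). A point s = (s₁,s₂) ∈ ℂ² is a critical value of F (i.e., s = F(x) for some x at which the derivative DF(x) is not surjective) if and only if s₁·s₂·(s₁ − s₂) = 0; in other words, the discriminant of F is the union of the three lines {s₁ = 0}, {s₂ = 0} and {s₁ = s₂}. -/

import Mathlib

/-- The involutive map `F : ℂ⁶ → ℂ²`,
`F(q₁,q₂,q₃,p₁,p₂,p₃) = (p₁q₁ + p₂q₂, p₂q₂ + p₃q₃)`; coordinates are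
`q₁ = x 0, q₂ = x 1, q₃ = x 2, p₁ = x 3, p₂ = x 4, p₃ = x 5`. -/
def pyramidalMap6 : (Fin 6 → ℂ) → (Fin 2 → ℂ) :=
  fun x => ![x 3 * x 0 + x 4 * x 1, x 4 * x 1 + x 5 * x 2]

/-- The Jacobian of `pyramidalMap6` at `x`, as a continuous linear map. -/
noncomputable def pyramidalDeriv (x : Fin 6 → ℂ) : (Fin 6 → ℂ) →L[ℂ] (Fin 2 → ℂ) :=
  ContinuousLinearMap.pi
    ![x 3 • ContinuousLinearMap.proj 0 + x 4 • ContinuousLinearMap.proj 1 +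
        x 0 • ContinuousLinearMap.proj 3 + x 1 • ContinuousLinearMap.proj 4,
      x 4 • ContinuousLinearMap.proj 1 + x 5 • ContinuousLinearMap.proj 2 +
        x 1 • ContinuousLinearMap.proj 4 + x 2 • ContinuousLinearMap.proj 5]

lemma pyramidalDeriv_apply (x v : Fin 6 → ℂ) :
    pyramidalDeriv x v = ![x 3 * v 0 + x 4 * v 1 + x 0 * v 3 + x 1 * v 4,
               x 4 * v 1 + x 5 * v 2 + x 1 * v 4 + x 2 * v 5] := by
  funext i
  fin_cases i <;>
    simp [pyramidalDeriv, ContinuousLinearMap.proj_apply]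

lemma hasFDerivAt_pyramidalMap6 (x : Fin 6 → ℂ) :
    HasFDerivAt pyramidalMap6 (pyramidalDeriv x) x := by
  rw [hasFDerivAt_pi']
  intro i
  fin_cases i
  · have h := ((ContinuousLinearMap.proj (R := ℂ) (φ := fun _ : Fin 6 => ℂ) 3).hasFDerivAt
        (x := x)).mul ((ContinuousLinearMap.proj 0).hasFDerivAt) |>.add
      (((ContinuousLinearMap.proj (R := ℂ) (φ := fun _ : Fin 6 => ℂ) 4).hasFDerivAt
        (x := x)).mul ((ContinuousLinearMap.proj 1).hasFDerivAt))
    convert h using 1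
    · ext v
      simp [pyramidalMap6]
    · ext v
      simp [pyramidalDeriv, ContinuousLinearMap.proj_apply]
      ring
  · have h := ((ContinuousLinearMap.proj (R := ℂ) (φ := fun _ : Fin 6 => ℂ) 4).hasFDerivAt
        (x := x)).mul ((ContinuousLinearMap.proj 1).hasFDerivAt) |>.add
      (((ContinuousLinearMap.proj (R := ℂ) (φ := fun _ : Fin 6 => ℂ) 5).hasFDerivAt
        (x := x)).mul ((ContinuousLinearMap.proj 2).hasFDerivAt))
    convert h using 1
    · ext v
      simp [pyramidalMap6]
    · ext v
      simp [pyramidalDeriv, ContinuousLinearMap.proj_apply]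
      ring

/-- If two columns of a continuous linear map `T : ℂ⁶ → ℂ²` have nonzero `2×2`
determinant, then `T` is surjective. -/
lemma surj_of_det {T : (Fin 6 → ℂ) →L[ℂ] (Fin 2 → ℂ)} (i j : Fin 6)
    (h : T (Pi.single i 1) 0 * T (Pi.single j 1) 1
        - T (Pi.single i 1) 1 * T (Pi.single j 1) 0 ≠ 0) :
    Function.Surjective T := by
  intro w
  set a0 := T (Pi.single i 1) 0 with ha0
  set a1 := T (Pi.single i 1) 1 with ha1
  set b0 := T (Pi.single j 1) 0 with hb0
  set b1 := T (Pi.single j 1) 1 with hb1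
  refine ⟨((w 0 * b1 - w 1 * b0) / (a0 * b1 - a1 * b0)) • (Pi.single i 1 : Fin 6 → ℂ) +
          ((w 1 * a0 - w 0 * a1) / (a0 * b1 - a1 * b0)) • (Pi.single j 1 : Fin 6 → ℂ), ?_⟩
  have h' : b1 * a0 - b0 * a1 ≠ 0 := by intro e; apply h; linear_combination e
  funext k
  fin_cases k <;>
  · simp only [map_add, map_smul, Pi.add_apply, Pi.smul_apply, smul_eq_mul,
      Fin.zero_eta, Fin.mk_one, ← ha0, ← ha1, ← hb0, ← hb1]
    field_simp
    ring

/-- A point `s ∈ ℂ²` is a critical value of `F(q,p) = (p₁q₁ + p₂q₂, p₂q₂ + p₃q₃)`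
(the image of a point where the derivative is not surjective) if and only if
`s₁ s₂ (s₁ - s₂) = 0`: the discriminant is the union of the three lines
`{s₁ = 0} ∪ {s₂ = 0} ∪ {s₁ = s₂}`. -/
theorem discriminant_pyramidalMap6 (s : Fin 2 → ℂ) :
    (∃ x : Fin 6 → ℂ, pyramidalMap6 x = s ∧
        ¬ Function.Surjective (fderiv ℂ pyramidalMap6 x)) ↔
      s 0 * s 1 * (s 0 - s 1) = 0 := by
  constructor
  · rintro ⟨x, hFx, hns⟩
    rw [(hasFDerivAt_pyramidalMap6 x).fderiv] at hns
    have m1 : x 3 * x 4 = 0 := by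
      by_contra hne
      refine hns (surj_of_det 0 1 ?_)
      have e : pyramidalDeriv x (Pi.single 0 1) 0 * pyramidalDeriv x (Pi.single 1 1) 1 -
          pyramidalDeriv x (Pi.single 0 1) 1 * pyramidalDeriv x (Pi.single 1 1) 0
          = x 3 * x 4 := by
        simp [pyramidalDeriv_apply, Pi.single_apply]
      rw [e]; exact hne
    have m2 : x 0 * x 5 = 0 := by
      by_contra hne
      refine hns (surj_of_det 3 2 ?_)
      have e : pyramidalDeriv x (Pi.single 3 1) 0 * pyramidalDeriv x (Pi.single 2 1) 1 -
          pyramidalDeriv x (Pi.single 3 1) 1 * pyramidalDeriv x (Pi.single 2 1) 0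
          = x 0 * x 5 := by
        simp [pyramidalDeriv_apply, Pi.single_apply]
      rw [e]; exact hne
    have m3 : x 4 * x 5 = 0 := by
      by_contra hne
      refine hns (surj_of_det 1 2 ?_)
      have e : pyramidalDeriv x (Pi.single 1 1) 0 * pyramidalDeriv x (Pi.single 2 1) 1 -
          pyramidalDeriv x (Pi.single 1 1) 1 * pyramidalDeriv x (Pi.single 2 1) 0
          = x 4 * x 5 := by
        simp [pyramidalDeriv_apply, Pi.single_apply]
      rw [e]; exact hne
    have hs0 : x 3 * x 0 + x 4 * x 1 = s 0 := by rw [← hFx]; simp [pyramidalMap6]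
    have hs1 : x 4 * x 1 + x 5 * x 2 = s 1 := by rw [← hFx]; simp [pyramidalMap6]
    rw [← hs0, ← hs1]
    linear_combination (x 3 * x 0 ^ 2 * x 1 + x 0 * x 4 * x 1 ^ 2) * m1 +
      (x 3 ^ 2 * x 0 * x 2 - x 3 * x 5 * x 2 ^ 2) * m2 -
      (x 4 * x 1 ^ 2 * x 2 + x 1 * x 5 * x 2 ^ 2) * m3
  · intro h
    rcases mul_eq_zero.mp h with h' | h3
    · rcases mul_eq_zero.mp h' with h1 | h2
      · -- s 0 = 0
        refine ⟨![0, 0, s 1, 0, 0, 1], ?_, ?_⟩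
        · funext i; fin_cases i <;> simp [pyramidalMap6, h1, show (![0, 0, s 1, 0, 0, 1] : Fin 6 → ℂ) 5 = 1 from rfl]
        · rw [(hasFDerivAt_pyramidalMap6 _).fderiv]
          intro hsurj
          obtain ⟨v, hv⟩ := hsurj ![1, 0]
          have := congrFun hv 0
          simp [pyramidalDeriv_apply, Matrix.cons_val_succ] at this
      · -- s 1 = 0
        refine ⟨![s 0, 0, 0, 1, 0, 0], ?_, ?_⟩
        · funext i; fin_cases i <;> simp [pyramidalMap6, h2, Matrix.cons_val_succ]
        · rw [(hasFDerivAt_pyramidalMap6 _).fderiv]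
          intro hsurj
          obtain ⟨v, hv⟩ := hsurj ![0, 1]
          have := congrFun hv 1
          simp [pyramidalDeriv_apply,
            show (![s 0, 0, 0, 1, 0, 0] : Fin 6 → ℂ) 5 = 0 from rfl] at this
    · -- s 0 = s 1
      have hss : s 1 = s 0 := (sub_eq_zero.mp h3).symm
      refine ⟨![0, s 0, 0, 0, 1, 0], ?_, ?_⟩
      · funext i; fin_cases i <;> simp [pyramidalMap6, hss, Matrix.cons_val_succ]
      · rw [(hasFDerivAt_pyramidalMap6 _).fderiv]
        intro hsurj
        obtain ⟨v, hv⟩ := hsurj ![1, 0]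
        have e0 := congrFun hv 0
        have e1 := congrFun hv 1
        simp [pyramidalDeriv_apply, show (![0, s 0, 0, 0, 1, 0] : Fin 6 → ℂ) 5 = 0 from rfl] at e0 e1
        rw [e1] at e0
        exact one_ne_zero e0.symm
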